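/- Let α ∈ ℓ¹ with 0 < ‖α‖₁ < 1 and infinite support. Then W_α contains no isometric copy of W_{r·e₁*} for r = ‖α‖₁. In particular, the functional α ∈ ℓ¹ = W_α* does not attain its norm on W_α. -/

import Mathlib

open Filter Topology

noncomputable section

/-- `x` belongs to the hyperplane `W_α` of the space `c` of convergent real sequences:
`x` converges and its limit equals `∑' i, α i * x i` (sequences are 0-indexed). -/
def MemW (α x : ℕ → ℝ) : Prop :=
  (∃ l : ℝ, Tendsto x atTop (𝓝 l)) ∧ Tendsto x atTop (𝓝 (∑' i, α i * x i))

/-- The sup norm of a real sequence. -/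
def supNorm (x : ℕ → ℝ) : ℝ := ⨆ i, |x i|

/-- The element `r·e₁* = (r,0,0,…)` of `ℓ¹`. -/
def rSeq (r : ℝ) : ℕ → ℝ := fun i => if i = 0 then r else 0

/- ==================== auxiliary material ==================== -/

private lemma supNorm_eq_of {x : ℕ → ℝ} {c : ℝ} (h₁ : ∀ i, |x i| ≤ c) {i₀ : ℕ}
    (h₂ : |x i₀| = c) : supNorm x = c :=
  le_antisymm (ciSup_le h₁)
    (h₂ ▸ le_ciSup ⟨c, by rintro v ⟨i, rfl⟩; exact h₁ i⟩ i₀)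

private lemma abs_le_supNorm {x : ℕ → ℝ} {l : ℝ} (hx : Tendsto x atTop (𝓝 l)) (i : ℕ) :
    |x i| ≤ supNorm x :=
  le_ciSup hx.abs.bddAbove_range i

private lemma exists_lt_supNorm {x : ℕ → ℝ} {c : ℝ} (h : c < supNorm x) :
    ∃ i, c < |x i| :=
  exists_lt_of_lt_ciSup h

/-- Part 2: the functional `α` does not attain its norm on the unit sphere of `W_α`. -/
private lemma noAttain (α : ℕ → ℝ) (hsum : Summable fun i => |α i|)
    (hlt : ∑' i, |α i| < 1) (hinf : {i | α i ≠ 0}.Infinite) :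
    ¬ ∃ x : ℕ → ℝ, MemW α x ∧ supNorm x = 1 ∧ |∑' i, α i * x i| = ∑' i, |α i| := by
  rintro ⟨x, hx, hx1, hat⟩
  have hxb : ∀ i, |x i| ≤ 1 := fun i => hx1 ▸ abs_le_supNorm hx.2 i
  have hbound : ∀ i, |α i * x i| ≤ |α i| := by
    intro i
    rw [abs_mul]
    calc |α i| * |x i| ≤ |α i| * 1 := mul_le_mul_of_nonneg_left (hxb i) (abs_nonneg _)
      _ = |α i| := mul_one _
  have hs1 : Summable fun i => |α i * x i| :=
    Summable.of_nonneg_of_le (fun i => abs_nonneg _) hbound hsum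
  have hl1 : |∑' i, α i * x i| < 1 := hat ▸ hlt
  have hev : ∀ᶠ i in atTop, |x i| < 1 := hx.2.abs.eventually_lt_const hl1
  rw [eventually_atTop] at hev
  obtain ⟨N, hN⟩ := hev
  obtain ⟨i₀, hi₀, hNi₀⟩ := hinf.exists_gt N
  have hi₀' : α i₀ ≠ 0 := hi₀
  have hstrict : |α i₀ * x i₀| < |α i₀| := by
    rw [abs_mul]
    have ha : 0 < |α i₀| := abs_pos.2 hi₀'
    have hb : |x i₀| < 1 := hN i₀ hNi₀.le
    nlinarith
  have h3 : ∑' i, |α i * x i| < ∑' i, |α i| := Summable.tsum_lt_tsum hbound hstrict hs1 hsum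
  have h4 : |∑' i, α i * x i| ≤ ∑' i, |α i * x i| := by
    simpa only [Real.norm_eq_abs] using
      norm_tsum_le_tsum_norm (f := fun i => α i * x i) (by simpa only [Real.norm_eq_abs] using hs1)
  linarith

/-- Core of part 1: a vector `y` together with "ℓ∞-like directions" `z n` along which the
norm grows affinely must attain the norm of the functional in the limit. -/
private lemma keyLemma (α : ℕ → ℝ) (hsum : Summable fun i => |α i|)
    (r : ℝ) (hr : r = ∑' i, |α i|) (hr0 : 0 < r) (hr1 : r < 1)
    (y : ℕ → ℝ) (z : ℕ → ℕ → ℝ)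
    (hy : MemW α y) (hy1 : supNorm y = 1)
    (hz : ∀ n, 1 ≤ n → MemW α (z n) ∧ supNorm (z n) = 1)
    (hzz : ∀ n m, 1 ≤ n → 1 ≤ m → n ≠ m →
      MemW α (z n + z m) ∧ supNorm (z n + z m) = 1)
    (hyz : ∀ (t : ℝ) (n : ℕ), 1 ≤ t → 1 ≤ n → supNorm (y + t • z n) = r + t) :
    |∑' i, α i * y i| = ∑' i, |α i| := by
  have hyb : ∀ i, |y i| ≤ 1 := fun i => hy1 ▸ abs_le_supNorm hy.2 i
  have hzb : ∀ n, 1 ≤ n → ∀ i, |z n i| ≤ 1 := fun n hn i =>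
    (hz n hn).2 ▸ abs_le_supNorm (hz n hn).1.2 i
  have hzzb : ∀ n m, 1 ≤ n → 1 ≤ m → n ≠ m → ∀ i, |z n i + z m i| ≤ 1 := by
    intro n m hn hm hnm i
    have h := hzz n m hn hm hnm
    have := h.2 ▸ abs_le_supNorm h.1.2 i
    simpa using this
  -- Claim A: alignment of y with each z n
  have claimA : ∀ ε : ℝ, 0 < ε → ε ≤ 1/2 → ∀ n, 1 ≤ n →
      ∃ i, r - ε < y i * z n i ∧ 1 - ε < |z n i| := by
    intro ε hε hε2 n hn
    set t : ℝ := 4 / ε with ht_def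
    have ht0 : 0 < t := by positivity
    have htε : t * ε = 4 := by rw [ht_def]; field_simp
    have ht1 : 1 ≤ t := by nlinarith
    have hsn : supNorm (y + t • z n) = r + t := hyz t n ht1 hn
    obtain ⟨i, hi⟩ : ∃ i, r + t - ε/2 < |(y + t • z n) i| := by
      apply exists_lt_supNorm
      rw [hsn]; linarith
    have hcoord : (y + t • z n) i = y i + t * z n i := rfl
    rw [hcoord] at hi
    refine ⟨i, ?_, ?_⟩
    · -- product bound
      have hs2 : (r + t - ε/2)^2 < (y i + t * z n i)^2 := by
        nlinarith [abs_nonneg (y i + t * z n i), sq_abs (y i + t * z n i)]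
      have ha2 : (y i)^2 ≤ 1 := by nlinarith [hyb i, abs_nonneg (y i), sq_abs (y i)]
      have hb2 : (z n i)^2 ≤ 1 := by
        nlinarith [hzb n hn i, abs_nonneg (z n i), sq_abs (z n i)]
      nlinarith [sq_nonneg (r - ε/2), mul_pos ht0 ht0,
        mul_nonneg (mul_nonneg ht0.le ht0.le) (sub_nonneg.2 hb2)]
    · -- size bound on z n i
      have habs : |y i + t * z n i| ≤ |y i| + t * |z n i| := by
        calc |y i + t * z n i| ≤ |y i| + |t * z n i| := abs_add_le _ _
          _ = |y i| + t * |z n i| := by rw [abs_mul, abs_of_pos ht0]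
      have h5 : t * (1 - ε) < t * |z n i| := by nlinarith [hyb i]
      exact lt_of_mul_lt_mul_left h5 ht0.le
  -- the set of coordinates where |y| is close to r is infinite
  have hSinf : ∀ ε : ℝ, 0 < ε → ε ≤ 1/2 → ε < r → {i | r - ε < |y i|}.Infinite := by
    intro ε hε hε2 hεr
    by_contra hcon
    rw [Set.not_infinite] at hcon
    have claimA' : ∀ n : ℕ, ∃ i, r - ε < y i * z (n+1) i ∧ 1 - ε < |z (n+1) i| :=
      fun n => claimA ε hε hε2 (n+1) (by omega)
    choose f hf1 hf2 using claimA'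
    have hmap : Set.MapsTo f Set.univ {i | r - ε < |y i|} := by
      intro n _
      have h1' := hf1 n
      have hle : y (f n) * z (n+1) (f n) ≤ |y (f n)| := by
        calc y (f n) * z (n+1) (f n) ≤ |y (f n) * z (n+1) (f n)| := le_abs_self _
          _ = |y (f n)| * |z (n+1) (f n)| := abs_mul _ _
          _ ≤ |y (f n)| * 1 :=
              mul_le_mul_of_nonneg_left (hzb (n+1) (by omega) (f n)) (abs_nonneg _)
          _ = |y (f n)| := mul_one _
      exact lt_of_lt_of_le h1' hle
    obtain ⟨n, -, m, -, hnm, hfe⟩ := Set.infinite_univ.exists_ne_map_eq_of_mapsTo hmap hcon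
    have ha := hf1 n
    have hb := hf1 m
    rw [← hfe] at hb
    have hza := hf2 n
    have hzb' := hf2 m
    rw [← hfe] at hzb'
    have hsum2 := hzzb (n+1) (m+1) (by omega) (by omega) (by omega) (f n)
    set a := z (n+1) (f n)
    set b := z (m+1) (f n)
    set c := y (f n)
    have habs2 := abs_le.1 hsum2
    rcases lt_abs.1 hza with hA | hA <;> rcases lt_abs.1 hzb' with hB | hB
    · linarith [habs2.2]
    · nlinarith [mul_pos (show (0:ℝ) < c * a by linarith) (show (0:ℝ) < -b by linarith),
        mul_pos (show (0:ℝ) < c * b by linarith) (show (0:ℝ) < a by linarith)]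
    · nlinarith [mul_pos (show (0:ℝ) < c * a by linarith) (show (0:ℝ) < b by linarith),
        mul_pos (show (0:ℝ) < c * b by linarith) (show (0:ℝ) < -a by linarith)]
    · linarith [habs2.1]
  -- conclude |lim y| = r
  have hltend : Tendsto (fun i => |y i|) atTop (𝓝 |∑' i, α i * y i|) := hy.2.abs
  have hge : ∀ ε : ℝ, 0 < ε → ε ≤ 1/2 → ε < r → r - ε ≤ |∑' i, α i * y i| := by
    intro ε hε hε2 hεr
    by_contra hcon
    push_neg at hcon
    have hev := hltend.eventually_lt_const hcon
    rw [eventually_atTop] at hev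
    obtain ⟨N, hN⟩ := hev
    obtain ⟨i, hi, hNi⟩ := (hSinf ε hε hε2 hεr).exists_gt N
    have hi' : r - ε < |y i| := hi
    linarith [hN i hNi.le]
  have hrle : r ≤ |∑' i, α i * y i| := by
    by_contra hcon
    push_neg at hcon
    set ε : ℝ := min ((r - |∑' i, α i * y i|)/2) (min (1/2) (r/2)) with hε_def
    have hε : 0 < ε := by
      apply lt_min
      · linarith [abs_nonneg (∑' i, α i * y i)]
      · apply lt_min <;> linarith
    have hε2 : ε ≤ 1/2 := le_trans (min_le_right _ _) (min_le_left _ _)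
    have hεr : ε < r := lt_of_le_of_lt (le_trans (min_le_right _ _) (min_le_right _ _))
      (by linarith)
    have h6 := hge ε hε hε2 hεr
    have h7 : ε ≤ (r - |∑' i, α i * y i|)/2 := min_le_left _ _
    linarith
  have hler : |∑' i, α i * y i| ≤ r := by
    have hyabs : ∀ i, |α i * y i| ≤ |α i| := by
      intro i
      rw [abs_mul]
      calc |α i| * |y i| ≤ |α i| * 1 := mul_le_mul_of_nonneg_left (hyb i) (abs_nonneg _)
        _ = |α i| := mul_one _
    have hs1 : Summable fun i => |α i * y i| :=
      Summable.of_nonneg_of_le (fun i => abs_nonneg _) hyabs hsum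
    have h4 : |∑' i, α i * y i| ≤ ∑' i, |α i * y i| := by
      simpa only [Real.norm_eq_abs] using
        norm_tsum_le_tsum_norm (f := fun i => α i * y i) (by simpa only [Real.norm_eq_abs] using hs1)
    calc |∑' i, α i * y i| ≤ ∑' i, |α i * y i| := h4
      _ ≤ ∑' i, |α i| := Summable.tsum_le_tsum hyabs hs1 hsum
      _ = r := hr.symm
  rw [← hr]
  linarith

/- the test vectors in `W_{r e₁*}` -/
private def uu (r : ℝ) : ℕ → ℝ := fun i => if i = 0 then 1 else r
private def ee (n : ℕ) : ℕ → ℝ := fun i => if i = n then 1 else 0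

private lemma uu_apply_zero (r : ℝ) : uu r 0 = 1 := if_pos rfl
private lemma uu_apply_ne (r : ℝ) {i : ℕ} (h : i ≠ 0) : uu r i = r := if_neg h
private lemma ee_apply_self (n : ℕ) : ee n n = 1 := if_pos rfl
private lemma ee_apply_ne {n i : ℕ} (h : i ≠ n) : ee n i = 0 := if_neg h
private lemma rSeq_apply_zero (r : ℝ) : rSeq r 0 = r := if_pos rfl
private lemma rSeq_apply_ne (r : ℝ) {i : ℕ} (h : i ≠ 0) : rSeq r i = 0 := if_neg h

private lemma tendsto_uu (r : ℝ) : Tendsto (uu r) atTop (𝓝 r) := by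
  apply tendsto_const_nhds.congr'
  filter_upwards [eventually_ge_atTop 1] with i hi
  show r = uu r i
  rw [uu_apply_ne r (by omega : i ≠ 0)]

private lemma tendsto_ee (n : ℕ) : Tendsto (ee n) atTop (𝓝 0) := by
  apply tendsto_const_nhds.congr'
  filter_upwards [eventually_ge_atTop (n + 1)] with i hi
  show (0 : ℝ) = ee n i
  rw [ee_apply_ne (by omega : i ≠ n)]

private lemma memW_uu (r : ℝ) : MemW (rSeq r) (uu r) := by
  have hts : ∑' i, rSeq r i * uu r i = r := by
    rw [tsum_eq_single 0 (fun b hb => by rw [rSeq_apply_ne r hb, zero_mul])]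
    rw [rSeq_apply_zero, uu_apply_zero, mul_one]
  exact ⟨⟨r, tendsto_uu r⟩, by rw [hts]; exact tendsto_uu r⟩

private lemma memW_smul_ee (r t : ℝ) {n : ℕ} (hn : 1 ≤ n) : MemW (rSeq r) (t • ee n) := by
  have hfun : (t • ee n) = fun i => t * ee n i := by funext i; rfl
  have htend : Tendsto (t • ee n) atTop (𝓝 0) := by
    rw [hfun]
    simpa using (tendsto_ee n).const_mul t
  have hts : ∑' i, rSeq r i * (t • ee n) i = 0 := by
    have h0 : ∀ i, rSeq r i * (t • ee n) i = 0 := by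
      intro i
      show rSeq r i * (t * ee n i) = 0
      rcases eq_or_ne i 0 with rfl | h
      · rw [ee_apply_ne (by omega : (0:ℕ) ≠ n), mul_zero, mul_zero]
      · rw [rSeq_apply_ne r h, zero_mul]
    calc ∑' i, rSeq r i * (t • ee n) i = ∑' _ : ℕ, (0:ℝ) := tsum_congr h0
      _ = 0 := tsum_zero
  exact ⟨⟨0, htend⟩, by rw [hts]; exact htend⟩

private lemma memW_ee (r : ℝ) {n : ℕ} (hn : 1 ≤ n) : MemW (rSeq r) (ee n) := by
  have := memW_smul_ee r 1 hn
  simpa using this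

private lemma memW_uu_ee (r t : ℝ) {n : ℕ} (hn : 1 ≤ n) :
    MemW (rSeq r) (uu r + t • ee n) := by
  have htend : Tendsto (uu r + t • ee n) atTop (𝓝 r) := by
    apply tendsto_const_nhds.congr'
    filter_upwards [eventually_ge_atTop (n + 1)] with i hi
    show r = uu r i + t * ee n i
    rw [uu_apply_ne r (by omega : i ≠ 0), ee_apply_ne (by omega : i ≠ n), mul_zero, add_zero]
  have hts : ∑' i, rSeq r i * (uu r + t • ee n) i = r := by
    rw [tsum_eq_single 0 (fun b hb => by rw [rSeq_apply_ne r hb, zero_mul])]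
    show rSeq r 0 * (uu r 0 + t * ee n 0) = r
    rw [rSeq_apply_zero, uu_apply_zero, ee_apply_ne (by omega : (0:ℕ) ≠ n), mul_zero,
      add_zero, mul_one]
  exact ⟨⟨r, htend⟩, by rw [hts]; exact htend⟩

private lemma memW_ee_ee (r : ℝ) {n m : ℕ} (hn : 1 ≤ n) (hm : 1 ≤ m) :
    MemW (rSeq r) (ee n + ee m) := by
  have htend : Tendsto (ee n + ee m) atTop (𝓝 0) := by
    have := (tendsto_ee n).add (tendsto_ee m)
    rw [← add_zero (0:ℝ)]; exact this
  have hts : ∑' i, rSeq r i * (ee n + ee m) i = 0 := by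
    have h0 : ∀ i, rSeq r i * (ee n + ee m) i = 0 := by
      intro i
      show rSeq r i * (ee n i + ee m i) = 0
      rcases eq_or_ne i 0 with rfl | h
      · rw [ee_apply_ne (by omega : (0:ℕ) ≠ n), ee_apply_ne (by omega : (0:ℕ) ≠ m),
          add_zero, mul_zero]
      · rw [rSeq_apply_ne r h, zero_mul]
    calc ∑' i, rSeq r i * (ee n + ee m) i = ∑' _ : ℕ, (0:ℝ) := tsum_congr h0
      _ = 0 := tsum_zero
  exact ⟨⟨0, htend⟩, by rw [hts]; exact htend⟩

private lemma supNorm_uu {r : ℝ} (h0 : 0 ≤ r) (h1 : r ≤ 1) : supNorm (uu r) = 1 := by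
  apply supNorm_eq_of (i₀ := 0)
  · intro i
    show |uu r i| ≤ 1
    rcases eq_or_ne i 0 with rfl | h
    · rw [uu_apply_zero, abs_one]
    · rw [uu_apply_ne r h, abs_of_nonneg h0]; exact h1
  · show |uu r 0| = 1
    rw [uu_apply_zero, abs_one]

private lemma supNorm_ee (n : ℕ) : supNorm (ee n) = 1 := by
  apply supNorm_eq_of (i₀ := n)
  · intro i
    show |ee n i| ≤ 1
    rcases eq_or_ne i n with rfl | h
    · rw [ee_apply_self, abs_one]
    · rw [ee_apply_ne h, abs_zero]; norm_num
  · show |ee n n| = 1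
    rw [ee_apply_self, abs_one]

private lemma supNorm_uu_ee {r t : ℝ} (h0 : 0 ≤ r) (h1 : r ≤ 1) (ht : 1 ≤ t)
    {n : ℕ} (hn : 1 ≤ n) : supNorm (uu r + t • ee n) = r + t := by
  have hne : n ≠ 0 := by omega
  have hval : |uu r n + t * ee n n| = r + t := by
    rw [uu_apply_ne r hne, ee_apply_self, mul_one, abs_of_nonneg (by linarith)]
  apply supNorm_eq_of (i₀ := n)
  · intro i
    show |uu r i + t * ee n i| ≤ r + t
    rcases eq_or_ne i n with rfl | h
    · exact le_of_eq hval
    · rw [ee_apply_ne h, mul_zero, add_zero]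
      rcases eq_or_ne i 0 with rfl | h2
      · rw [uu_apply_zero, abs_one]; linarith
      · rw [uu_apply_ne r h2, abs_of_nonneg h0]; linarith
  · show |uu r n + t * ee n n| = r + t
    exact hval

private lemma supNorm_ee_ee {n m : ℕ} (hnm : n ≠ m) : supNorm (ee n + ee m) = 1 := by
  have hval : |ee n n + ee m n| = 1 := by
    rw [ee_apply_self, ee_apply_ne hnm, add_zero, abs_one]
  apply supNorm_eq_of (i₀ := n)
  · intro i
    show |ee n i + ee m i| ≤ 1
    rcases eq_or_ne i n with rfl | h
    · exact le_of_eq hval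
    · rw [ee_apply_ne h]
      rcases eq_or_ne i m with rfl | h2
      · rw [ee_apply_self, zero_add, abs_one]
      · rw [ee_apply_ne h2, add_zero, abs_zero]; norm_num
  · show |ee n n + ee m n| = 1
    exact hval

/- ==================== the theorem ==================== -/

theorem stmt6 (α : ℕ → ℝ) (hsum : Summable fun i => |α i|)
    (hpos : 0 < ∑' i, |α i|) (hlt : ∑' i, |α i| < 1)
    (hinf : {i | α i ≠ 0}.Infinite)
    (r : ℝ) (hr : r = ∑' i, |α i|) :
    (¬ ∃ T : (ℕ → ℝ) → (ℕ → ℝ),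
        (∀ x, MemW (rSeq r) x → MemW α (T x) ∧ supNorm (T x) = supNorm x) ∧
        (∀ x y, MemW (rSeq r) x → MemW (rSeq r) y → T (x + y) = T x + T y) ∧
        (∀ (a : ℝ) (x : ℕ → ℝ), MemW (rSeq r) x → T (a • x) = a • T x)) ∧
    (¬ ∃ x : ℕ → ℝ, MemW α x ∧ supNorm x = 1 ∧ |∑' i, α i * x i| = ∑' i, |α i|) := by
  have hr0 : 0 < r := hr ▸ hpos
  have hr1 : r < 1 := hr ▸ hlt
  refine ⟨?_, noAttain α hsum hlt hinf⟩
  rintro ⟨T, h1, h2, h3⟩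
  apply noAttain α hsum hlt hinf
  refine ⟨T (uu r), (h1 _ (memW_uu r)).1,
    (h1 _ (memW_uu r)).2.trans (supNorm_uu hr0.le hr1.le), ?_⟩
  apply keyLemma α hsum r hr hr0 hr1 (T (uu r)) (fun n => T (ee n))
    (h1 _ (memW_uu r)).1 ((h1 _ (memW_uu r)).2.trans (supNorm_uu hr0.le hr1.le))
  · intro n hn
    exact ⟨(h1 _ (memW_ee r hn)).1, (h1 _ (memW_ee r hn)).2.trans (supNorm_ee n)⟩
  · intro n m hn hm hnm
    have hTz : T (ee n + ee m) = T (ee n) + T (ee m) := h2 _ _ (memW_ee r hn) (memW_ee r hm)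
    have h := h1 _ (memW_ee_ee r hn hm)
    rw [hTz] at h
    exact ⟨h.1, h.2.trans (supNorm_ee_ee hnm)⟩
  · intro t n ht hn
    have hTz : T (uu r + t • ee n) = T (uu r) + t • T (ee n) := by
      rw [h2 _ _ (memW_uu r) (memW_smul_ee r t hn), h3 t _ (memW_ee r hn)]
    have h := h1 _ (memW_uu_ee r t hn)
    rw [hTz] at h
    exact h.2.trans (supNorm_uu_ee hr0.le hr1.le ht hn)
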